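/- Fix integers r < N and C ≥ 0, and let v^N : Fin N → ℝ and v^C : Fin C → ℝ be antitone with nonnegative values. For 0 ≤ a ≤ min(C, r) define u_C(a) = ∑_{i < a} v^C i − a · v^N (r − a). If a ∈ {1, …, min(C, r)} is a maximizer of u_C over {0, …, min(C, r)}, then v^C i ≥ v^N (r − a) for every i < a; that is, at a collusive optimum every winning colluder values the item at least the resulting auction price, so the colluders need never bid above their true valuations (no bid loading). -/
import Mathlib


/-- If `a ∈ {1,…,min C r}` maximizes the colluders' joint utility
`uC a = ∑_{i<a} vC i - a * vN (r - a)` over `{0,…,min C r}`, then every winning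
colluder values the item at least the resulting auction price `vN (r - a)`; hence the
colluders need never bid above their true valuations (no bid loading). -/
theorem stmt_4 (r N C : ℕ) (hrN : r < N)
    (vN : Fin N → ℝ) (vC : Fin C → ℝ)
    (hvN : Antitone vN) (hvC : Antitone vC)
    (hvNnn : ∀ i, 0 ≤ vN i) (hvCnn : ∀ i, 0 ≤ vC i)
    (uC : ℕ → ℝ)
    (huC : ∀ a : ℕ, uC a =
      (∑ i ∈ Finset.range a, if h : i < C then vC ⟨i, h⟩ else 0)
        - (a : ℝ) * vN ⟨r - a, lt_of_le_of_lt (Nat.sub_le r a) hrN⟩)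
    (a : ℕ) (ha1 : 1 ≤ a) (ha2 : a ≤ min C r)
    (hamax : ∀ a' ≤ min C r, uC a' ≤ uC a) :
    ∀ i : Fin C, (i : ℕ) < a →
      vN ⟨r - a, lt_of_le_of_lt (Nat.sub_le r a) hrN⟩ ≤ vC i := by
  obtain ⟨b, rfl⟩ : ∃ b, a = b + 1 := ⟨a - 1, (Nat.succ_pred_eq_of_pos ha1).symm⟩
  intro i hi
  have haC : b + 1 ≤ C := le_trans ha2 (min_le_left _ _)
  have hbC : b < C := haC
  have h1 : uC b ≤ uC (b + 1) :=
    hamax _ (le_trans (Nat.le_succ b) ha2)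
  rw [huC, huC, Finset.sum_range_succ, dif_pos hbC] at h1
  set P := vN ⟨r - (b + 1), lt_of_le_of_lt (Nat.sub_le r (b + 1)) hrN⟩ with hP
  set Q := vN ⟨r - b, lt_of_le_of_lt (Nat.sub_le r b) hrN⟩ with hQ
  have hQP : Q ≤ P := by
    apply hvN
    show r - (b + 1) ≤ r - b
    omega
  have hib : (i : ℕ) ≤ b := Nat.lt_succ_iff.mp hi
  have hmono : vC ⟨b, hbC⟩ ≤ vC i := hvC hib
  have hb0 : (0 : ℝ) ≤ (b : ℝ) := Nat.cast_nonneg b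
  push_cast at h1
  nlinarith [mul_nonneg hb0 (sub_nonneg.mpr hQP)]
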